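/- Let n, k ∈ ℕ with 1 < k < n and k - (k mod 2) ≥ 2√n (equivalently, (k - k mod 2)² ≥ 4n). Then there exists an (n,k)-selection mechanism that is impartial and α-optimal with α = (k - k mod 2) / (k · ⌈2n / (k - k mod 2)⌉). -/

import Mathlib

open Finset

/-- A valid weight matrix: nonnegative entries and zero diagonal. -/
def IsValidMatrix {n : ℕ} (A : Matrix (Fin n) (Fin n) ℝ) : Prop :=
  (∀ i j, 0 ≤ A i j) ∧ ∀ i, A i i = 0

/-- Score of a subset `S` of agents: total weight of votes received by members of `S`. -/
def score {n : ℕ} (A : Matrix (Fin n) (Fin n) ℝ) (S : Finset (Fin n)) : ℝ :=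
  ∑ i : Fin n, ∑ j ∈ S, A i j

/-- The maximum score over all subsets of cardinality `k`. -/
noncomputable def optScore {n : ℕ} (k : ℕ) (A : Matrix (Fin n) (Fin n) ℝ) : ℝ :=
  sSup {x : ℝ | ∃ S : Finset (Fin n), S.card = k ∧ score A S = x}

/-- Impartiality: an agent cannot influence its own selection. -/
def Impartial {n : ℕ} (f : Matrix (Fin n) (Fin n) ℝ → Finset (Fin n)) : Prop :=
  ∀ A A' : Matrix (Fin n) (Fin n) ℝ, IsValidMatrix A → IsValidMatrix A' →
    ∀ i : Fin n, (∀ i', i' ≠ i → A i' = A' i') → (i ∈ f A ↔ i ∈ f A')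

/-- `α`-optimality of an `(n,k)`-selection mechanism. -/
def AlphaOptimal {n : ℕ} (k : ℕ) (f : Matrix (Fin n) (Fin n) ℝ → Finset (Fin n))
    (α : ℝ) : Prop :=
  ∀ A : Matrix (Fin n) (Fin n) ℝ, IsValidMatrix A → α * optScore k A ≤ score A (f A)

/- ----------------------------------------------------------------
   Auxiliary development for the mechanism.
   ---------------------------------------------------------------- -/

namespace ImpSel

open scoped Classical

variable {n : ℕ}

/-- Column index of agent `i` in a `g × g` layout. -/
def cIdx (g : ℕ) (i : Fin n) : ℕ := i.1 % g

/-- (Diagonal) row index of agent `i`. -/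
def rIdx (g : ℕ) (i : Fin n) : ℕ := (i.1 % g + i.1 / g) % g

/-- Votes received by `j` from agents in other columns. -/
noncomputable def eHat1 (g : ℕ) (A : Matrix (Fin n) (Fin n) ℝ) (j : Fin n) : ℝ :=
  ∑ i ∈ univ.filter (fun i : Fin n => ¬ cIdx g i = cIdx g j), A i j

/-- Votes received by `j` from other agents of its own column. -/
noncomputable def eHat2 (g : ℕ) (A : Matrix (Fin n) (Fin n) ℝ) (j : Fin n) : ℝ :=
  ∑ i ∈ univ.filter (fun i : Fin n => cIdx g i = cIdx g j ∧ i ≠ j), A i j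

/-- `j` is the (lexicographic) argmax of `e` within its `idx`-block. -/
def isBest (e : Fin n → ℝ) (idx : Fin n → ℕ) (j : Fin n) : Prop :=
  ∀ i : Fin n, idx i = idx j → i ≠ j → (e i < e j ∨ (e i = e j ∧ j.1 < i.1))

/-- The mechanism: select the best of each column w.r.t. cross-column votes,
and the best of each (diagonal) row w.r.t. own-column votes. -/
noncomputable def mech (g : ℕ) (A : Matrix (Fin n) (Fin n) ℝ) : Finset (Fin n) :=
  univ.filter (fun j => isBest (eHat1 g A) (cIdx g) j ∨ isBest (eHat2 g A) (rIdx g) j)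

lemma mem_mech {g : ℕ} {A : Matrix (Fin n) (Fin n) ℝ} {j : Fin n} :
    j ∈ mech g A ↔
      (isBest (eHat1 g A) (cIdx g) j ∨ isBest (eHat2 g A) (rIdx g) j) := by
  simp [mech]

/-- Orthogonality: column and row indices identify the agent. -/
lemma inj {g : ℕ} (hg : 0 < g) (hng : n ≤ g * g) {i j : Fin n}
    (h1 : cIdx g i = cIdx g j) (h2 : rIdx g i = rIdx g j) : i = j := by
  have h1' : i.1 % g = j.1 % g := h1
  have hiq : i.1 / g < g := (Nat.div_lt_iff_lt_mul hg).2 (lt_of_lt_of_le i.2 hng)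
  have hjq : j.1 / g < g := (Nat.div_lt_iff_lt_mul hg).2 (lt_of_lt_of_le j.2 hng)
  have h2' : (i.1 % g + i.1 / g) % g = (j.1 % g + j.1 / g) % g := h2
  rw [h1'] at h2'
  have hmod : i.1 / g ≡ j.1 / g [MOD g] := Nat.ModEq.add_left_cancel' _ h2'
  have hq : i.1 / g = j.1 / g := by
    have := hmod
    unfold Nat.ModEq at this
    rwa [Nat.mod_eq_of_lt hiq, Nat.mod_eq_of_lt hjq] at this
  apply Fin.ext
  calc i.1 = g * (i.1 / g) + i.1 % g := (Nat.div_add_mod i.1 g).symm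
    _ = g * (j.1 / g) + j.1 % g := by rw [hq, h1']
    _ = j.1 := Nat.div_add_mod j.1 g

lemma best_unique {e : Fin n → ℝ} {idx : Fin n → ℕ} {i j : Fin n}
    (hi : isBest e idx i) (hj : isBest e idx j) (h : idx i = idx j) : i = j := by
  by_contra hne
  rcases hj i h hne with h1 | ⟨h1, h2⟩
  · rcases hi j h.symm (Ne.symm hne) with h3 | ⟨h3, h4⟩
    · exact absurd (h1.trans h3) (lt_irrefl _)
    · exact absurd h3 (ne_of_gt h1)
  · rcases hi j h.symm (Ne.symm hne) with h3 | ⟨h3, h4⟩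
    · exact absurd (h1 ▸ h3) (lt_irrefl _)
    · omega

lemma best_card {g : ℕ} (e : Fin n → ℝ) (idx : Fin n → ℕ) (hidx : ∀ j, idx j < g) :
    (univ.filter (fun j => isBest e idx j)).card ≤ g := by
  have h := Finset.card_le_card_of_injOn idx
    (fun a _ => Finset.mem_range.2 (hidx a))
    (s := univ.filter (fun j => isBest e idx j)) ?_
  · simpa using h
  · intro a ha b hb hab
    simp only [coe_filter, Set.mem_setOf_eq, mem_univ, true_and] at ha hb
    exact best_unique ha hb hab

lemma exists_best (e : Fin n → ℝ) (idx : Fin n → ℕ) {l : ℕ}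
    (hne : (univ.filter (fun i : Fin n => idx i = l)).Nonempty) :
    ∃ b : Fin n, idx b = l ∧ isBest e idx b ∧ ∀ j : Fin n, idx j = l → e j ≤ e b := by
  set S := univ.filter (fun i : Fin n => idx i = l) with hS
  obtain ⟨v, hv, hvm⟩ := S.exists_max_image e hne
  set M := S.filter (fun j => ∀ x ∈ S, e x ≤ e j) with hM
  have hMne : M.Nonempty := ⟨v, by simp only [hM, mem_filter]; exact ⟨hv, hvm⟩⟩
  set b := M.min' hMne with hb
  have hbM : b ∈ M := M.min'_mem hMne
  simp only [hM, mem_filter] at hbM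
  obtain ⟨hbS, hbmax⟩ := hbM
  have hbl : idx b = l := by
    simpa [hS, mem_filter] using hbS
  refine ⟨b, hbl, ?_, ?_⟩
  · intro i hil hne'
    have hiS : i ∈ S := by simp [hS, mem_filter, hil.trans hbl]
    have hle : e i ≤ e b := hbmax i hiS
    rcases lt_or_eq_of_le hle with h | h
    · exact Or.inl h
    · refine Or.inr ⟨h, ?_⟩
      have hiM : i ∈ M := by
        simp only [hM, mem_filter]
        refine ⟨hiS, fun x hx => ?_⟩
        rw [h]; exact hbmax x hx
      have := M.min'_le i hiM
      rw [← hb] at this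
      have hlt : b < i := lt_of_le_of_ne this (Ne.symm hne')
      exact hlt
  · intro j hjl
    exact hbmax j (by simp [hS, mem_filter, hjl])

/-- Key averaging lemma: the selected block-maxima capture a `c` fraction of the
total, provided each block has measure at most `1/c`. -/
lemma key (hn : 0 < n) (e : Fin n → ℝ) (idx : Fin n → ℕ) (he : ∀ j, 0 ≤ e j)
    (c : ℝ) (hc : 0 ≤ c)
    (hcard : ∀ j : Fin n,
      c * ((univ.filter (fun i : Fin n => idx i = idx j)).card : ℝ) ≤ 1) :
    c * ∑ j, e j ≤ ∑ j ∈ univ.filter (fun j => isBest e idx j), e j := by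
  haveI : Nonempty (Fin n) := ⟨⟨0, hn⟩⟩
  set L := univ.image idx with hL
  have hfib : ∑ j : Fin n, e j
      = ∑ l ∈ L, ∑ j ∈ univ.filter (fun j : Fin n => idx j = l), e j :=
    (Finset.sum_fiberwise_of_maps_to (fun x _ => mem_image_of_mem idx (mem_univ x)) e).symm
  have hex : ∀ l : ℕ, l ∈ L → ∃ b : Fin n, idx b = l ∧ isBest e idx b ∧
      ∀ j : Fin n, idx j = l → e j ≤ e b := by
    intro l hl
    obtain ⟨x, -, hx⟩ := mem_image.1 hl
    exact exists_best e idx ⟨x, by simp [hx]⟩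
  choose! b hb1 hb2 hb3 using hex
  calc c * ∑ j, e j
      = ∑ l ∈ L, c * ∑ j ∈ univ.filter (fun j : Fin n => idx j = l), e j := by
        rw [hfib, Finset.mul_sum]
    _ ≤ ∑ l ∈ L, e (b l) := by
        apply Finset.sum_le_sum
        intro l hl
        have h3 := hb3 l hl
        have hsum : ∑ j ∈ univ.filter (fun j : Fin n => idx j = l), e j
            ≤ ((univ.filter (fun j : Fin n => idx j = l)).card : ℝ) * e (b l) := by
          have := Finset.sum_le_card_nsmul (univ.filter (fun j : Fin n => idx j = l)) e
            (e (b l)) (fun x hx => h3 x (by simpa using hx))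
          simpa [nsmul_eq_mul] using this
        have hcb : c * ((univ.filter (fun j : Fin n => idx j = l)).card : ℝ) ≤ 1 := by
          have h := hcard (b l)
          rw [hb1 l hl] at h
          exact h
        have he' : 0 ≤ e (b l) := he _
        calc c * ∑ j ∈ univ.filter (fun j : Fin n => idx j = l), e j
            ≤ c * (((univ.filter (fun j : Fin n => idx j = l)).card : ℝ) * e (b l)) :=
              mul_le_mul_of_nonneg_left hsum hc
          _ = (c * ((univ.filter (fun j : Fin n => idx j = l)).card : ℝ)) * e (b l) := by
              ring
          _ ≤ 1 * e (b l) := mul_le_mul_of_nonneg_right hcb he'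
          _ = e (b l) := one_mul _
    _ = ∑ j ∈ L.image b, e j := by
        have hinj : ∀ x ∈ L, ∀ y ∈ L, b x = b y → x = y := by
          intro x hx y hy hxy
          rw [← hb1 x hx, ← hb1 y hy, hxy]
        exact (Finset.sum_image hinj).symm
    _ ≤ ∑ j ∈ univ.filter (fun j => isBest e idx j), e j := by
        apply Finset.sum_le_sum_of_subset_of_nonneg
        · intro j hj
          obtain ⟨l, hl, rfl⟩ := mem_image.1 hj
          simp only [mem_filter, mem_univ, true_and]
          exact hb2 l hl
        · intro j _ _
          exact he j

lemma fiber_card_col {g p : ℕ} (hg : 0 < g) (hp : ∀ i : Fin n, i.1 / g < p) (j : Fin n) :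
    ((univ.filter (fun i : Fin n => cIdx g i = cIdx g j)).card) ≤ p := by
  have h := Finset.card_le_card_of_injOn (fun i : Fin n => i.1 / g)
    (fun a _ => Finset.mem_range.2 (hp a))
    (s := univ.filter (fun i : Fin n => cIdx g i = cIdx g j)) ?_
  · simpa using h
  · intro a ha b hb hab
    simp only [coe_filter, Set.mem_setOf_eq, mem_univ, true_and] at ha hb
    have hab' : a.1 / g = b.1 / g := hab
    have hm : a.1 % g = b.1 % g := by
      have : cIdx g a = cIdx g b := ha.trans hb.symm
      exact this
    apply Fin.ext
    calc a.1 = g * (a.1 / g) + a.1 % g := (Nat.div_add_mod a.1 g).symm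
      _ = g * (b.1 / g) + b.1 % g := by rw [hab', hm]
      _ = b.1 := Nat.div_add_mod b.1 g

lemma fiber_card_row {g p : ℕ} (hg : 0 < g) (hp : ∀ i : Fin n, i.1 / g < p) (j : Fin n) :
    ((univ.filter (fun i : Fin n => rIdx g i = rIdx g j)).card) ≤ p := by
  have h := Finset.card_le_card_of_injOn (fun i : Fin n => i.1 / g)
    (fun a _ => Finset.mem_range.2 (hp a))
    (s := univ.filter (fun i : Fin n => rIdx g i = rIdx g j)) ?_
  · simpa using h
  · intro a ha b hb hab
    simp only [coe_filter, Set.mem_setOf_eq, mem_univ, true_and] at ha hb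
    have hab' : a.1 / g = b.1 / g := hab
    have hr : (a.1 % g + a.1 / g) % g = (b.1 % g + b.1 / g) % g := ha.trans hb.symm
    rw [hab'] at hr
    have hmod : a.1 % g ≡ b.1 % g [MOD g] := Nat.ModEq.add_right_cancel' _ hr
    have hma : a.1 % g < g := Nat.mod_lt _ hg
    have hmb : b.1 % g < g := Nat.mod_lt _ hg
    have hm : a.1 % g = b.1 % g := by
      have := hmod
      unfold Nat.ModEq at this
      rwa [Nat.mod_eq_of_lt hma, Nat.mod_eq_of_lt hmb] at this
    apply Fin.ext
    calc a.1 = g * (a.1 / g) + a.1 % g := (Nat.div_add_mod a.1 g).symm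
      _ = g * (b.1 / g) + b.1 % g := by rw [hab', hm]
      _ = b.1 := Nat.div_add_mod b.1 g

lemma isBest_congr {e e' : Fin n → ℝ} {idx : Fin n → ℕ} {j : Fin n}
    (h : ∀ u : Fin n, idx u = idx j → e u = e' u) :
    isBest e idx j ↔ isBest e' idx j := by
  constructor <;> intro hb i hi hne
  · have := hb i hi hne
    rw [h i hi, h j rfl] at this
    exact this
  · have := hb i hi hne
    rw [← h i hi, ← h j rfl] at this
    exact this

lemma eHat1_eq {g : ℕ} {A A' : Matrix (Fin n) (Fin n) ℝ} {i : Fin n}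
    (hrow : ∀ v : Fin n, v ≠ i → A v = A' v) {u : Fin n} (hu : cIdx g u = cIdx g i) :
    eHat1 g A u = eHat1 g A' u := by
  unfold eHat1
  apply Finset.sum_congr rfl
  intro v hv
  simp only [mem_filter, mem_univ, true_and] at hv
  have hvi : v ≠ i := by
    intro hh
    exact hv (by rw [hh, hu])
  rw [hrow v hvi]

lemma eHat2_eq {g : ℕ} (hg : 0 < g) (hng : n ≤ g * g)
    {A A' : Matrix (Fin n) (Fin n) ℝ} {i : Fin n}
    (hrow : ∀ v : Fin n, v ≠ i → A v = A' v) {u : Fin n} (hu : rIdx g u = rIdx g i) :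
    eHat2 g A u = eHat2 g A' u := by
  unfold eHat2
  apply Finset.sum_congr rfl
  intro v hv
  simp only [mem_filter, mem_univ, true_and] at hv
  have hvi : v ≠ i := by
    rintro rfl
    exact hv.2 (inj hg hng hv.1.symm hu).symm
  rw [hrow v hvi]

end ImpSel

open ImpSel in
/-- Deterministic impartial selection with weights: for `1 < k < n` and
`k - k % 2 ≥ 2√n`, there exists an impartial `(n,k)`-selection mechanism that is
`α`-optimal with `α = (k - k % 2) / (k * ⌈2n / (k - k % 2)⌉)`. -/
theorem stmt0 (n k : ℕ) (h1 : 1 < k) (h2 : k < n) (h3 : 4 * n ≤ (k - k % 2) ^ 2) :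
    ∃ f : Matrix (Fin n) (Fin n) ℝ → Finset (Fin n),
      (∀ A, (f A).card ≤ k) ∧ Impartial f ∧
      AlphaOptimal k f
        (((k - k % 2 : ℕ) : ℝ) /
          ((k : ℝ) * ((⌈(2 * (n : ℝ)) / ((k - k % 2 : ℕ) : ℝ)⌉ : ℤ) : ℝ))) := by
  classical
  -- Notation
  set K : ℕ := k - k % 2 with hKdef
  have hK2 : 2 ≤ K := by omega
  have hK0 : 0 < K := by omega
  have hKk : K ≤ k := by omega
  have hn0 : 0 < n := by omega
  -- m = ⌈2n/K⌉
  set mN : ℕ := (2 * n - 1) / K + 1 with hmNdef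
  have hmN1 : 1 ≤ mN := Nat.le_add_left 1 _
  -- 2n ≤ mN * K
  have hdm := Nat.div_add_mod (2 * n - 1) K
  have hdm2 : (2 * n - 1) % K < K := Nat.mod_lt _ hK0
  have hmK : 2 * n ≤ mN * K := by
    have hexp : mN * K = K * ((2 * n - 1) / K) + K := by
      rw [hmNdef]; ring
    rw [hexp]
    set a := K * ((2 * n - 1) / K) with ha
    omega
  have hmK2 : ((2 * n - 1) / K) * K ≤ 2 * n - 1 := Nat.div_mul_le_self _ _
  -- s = ⌊k mN / K⌋
  set s : ℕ := k * mN / K with hsdef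
  have hs_mN : mN ≤ s := by
    have h1' : K * mN / K = mN := Nat.mul_div_cancel_left mN hK0
    have h2' : K * mN ≤ k * mN := Nat.mul_le_mul_right mN hKk
    have h3' : K * mN / K ≤ k * mN / K := Nat.div_le_div_right h2'
    rwa [h1'] at h3'
  have hs0 : 0 < s := lt_of_lt_of_le hmN1 hs_mN
  have hsK : s * K ≤ k * mN := Nat.div_mul_le_self _ _
  -- h = K/2
  set hf : ℕ := K / 2 with hhdef
  have hKh : K = 2 * hf := by omega
  have hnh : n ≤ hf * hf := by
    have h4 : 4 * n ≤ K ^ 2 := h3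
    have h5 : K ^ 2 = 4 * (hf * hf) := by rw [hKh]; ring
    omega
  -- g
  set g : ℕ := max (Nat.sqrt (n - 1) + 1) ((n - 1) / s + 1) with hgdef
  have hg0 : 0 < g := by
    have : 0 < Nat.sqrt (n - 1) + 1 := by omega
    exact lt_of_lt_of_le this (le_max_left _ _)
  have hg1h : Nat.sqrt (n - 1) + 1 ≤ hf := by
    have hlt : n - 1 < hf ^ 2 := by
      rw [pow_two]
      omega
    have := Nat.sqrt_lt'.2 hlt
    omega
  have hmNh : n ≤ hf * mN := by
    have hexp : mN * (2 * hf) = 2 * (hf * mN) := by ring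
    rw [hKh, hexp] at hmK
    omega
  have hg2h : (n - 1) / s + 1 ≤ hf := by
    have hns : n ≤ hf * s := le_trans hmNh (Nat.mul_le_mul_left hf hs_mN)
    have : (n - 1) / s < hf := (Nat.div_lt_iff_lt_mul hs0).2 (by omega)
    omega
  have hgh : g ≤ hf := max_le hg1h hg2h
  have h2g : 2 * g ≤ k := by omega
  have hng : n ≤ g * g := by
    have hlt : n - 1 < (Nat.sqrt (n - 1) + 1) ^ 2 := Nat.lt_succ_sqrt' (n - 1)
    have h6 : (Nat.sqrt (n - 1) + 1) ^ 2 = (Nat.sqrt (n - 1) + 1) * (Nat.sqrt (n - 1) + 1) := by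
      ring
    have h7 : (Nat.sqrt (n - 1) + 1) * (Nat.sqrt (n - 1) + 1) ≤ g * g :=
      Nat.mul_le_mul (le_max_left _ _) (le_max_left _ _)
    omega
  -- p
  set p : ℕ := (n - 1) / g + 1 with hpdef
  have hpq : ∀ i : Fin n, i.1 / g < p := by
    intro i
    have hle : i.1 ≤ n - 1 := by omega
    have := Nat.div_le_div_right (c := g) hle
    omega
  have hps : p ≤ s := by
    have hdm3 := Nat.div_add_mod (n - 1) s
    have hdm4 : (n - 1) % s < s := Nat.mod_lt _ hs0
    have hsg2 : n ≤ s * ((n - 1) / s + 1) := by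
      have hexp : s * ((n - 1) / s + 1) = s * ((n - 1) / s) + s := by ring
      omega
    have hsg : n ≤ s * g := by
      refine le_trans hsg2 (Nat.mul_le_mul_left s ?_)
      exact le_max_right _ _
    have : (n - 1) / g < s := (Nat.div_lt_iff_lt_mul hg0).2 (by omega)
    omega
  have hKp : K * p ≤ k * mN := by
    calc K * p ≤ K * s := Nat.mul_le_mul_left K hps
      _ = s * K := Nat.mul_comm _ _
      _ ≤ k * mN := hsK
  -- the ceiling is mN
  have hkm0 : (0 : ℝ) < ((k * mN : ℕ) : ℝ) := by
    have : 0 < k * mN := by positivity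
    exact_mod_cast this
  have hKR : (0 : ℝ) < (K : ℝ) := by exact_mod_cast hK0
  have h8 : (mN - 1) * K < 2 * n := by
    have h9 : mN - 1 = (2 * n - 1) / K := by omega
    rw [h9]
    set a := (2 * n - 1) / K * K with ha
    omega
  have hmNR : (((mN : ℤ)) : ℝ) = (mN : ℝ) := Int.cast_natCast mN
  have hceil : (⌈(2 * (n : ℝ)) / ((K : ℕ) : ℝ)⌉ : ℤ) = (mN : ℤ) := by
    rw [Int.ceil_eq_iff]
    constructor
    · rw [hmNR, lt_div_iff₀ hKR]
      have h11 : ((mN : ℝ) - 1) * (K : ℝ) = ((mN - 1 : ℕ) : ℝ) * (K : ℝ) := by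
        rw [Nat.cast_sub hmN1]; ring
      rw [h11]
      exact_mod_cast h8
    · rw [hmNR, div_le_iff₀ hKR]
      exact_mod_cast hmK
  -- the constant
  set c : ℝ := (K : ℝ) / ((k * mN : ℕ) : ℝ) with hcdef
  have hc0 : 0 ≤ c := by positivity
  have hαc : ((K : ℕ) : ℝ) / ((k : ℝ) * ((⌈(2 * (n : ℝ)) / ((K : ℕ) : ℝ)⌉ : ℤ) : ℝ)) = c := by
    rw [hceil, Int.cast_natCast, hcdef, Nat.cast_mul]
  have hKpR : (K : ℝ) * (p : ℝ) ≤ ((k * mN : ℕ) : ℝ) := by exact_mod_cast hKp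
  have hcard_le_one : ∀ q : ℕ, q ≤ p → c * (q : ℝ) ≤ 1 := by
    intro q hq
    have h1' : (q : ℝ) ≤ (p : ℝ) := by exact_mod_cast hq
    calc c * (q : ℝ) ≤ c * (p : ℝ) := mul_le_mul_of_nonneg_left h1' hc0
      _ = (K : ℝ) * (p : ℝ) / ((k * mN : ℕ) : ℝ) := by rw [hcdef]; ring
      _ ≤ 1 := (div_le_one hkm0).2 hKpR
  refine ⟨mech g, ?_, ?_, ?_⟩
  · -- cardinality
    intro A
    have hsub : mech g A ⊆
        (univ.filter (fun j => isBest (eHat1 g A) (cIdx g) j)) ∪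
        (univ.filter (fun j => isBest (eHat2 g A) (rIdx g) j)) := by
      intro j hj
      rw [mem_mech] at hj
      rcases hj with hj | hj
      · exact Finset.mem_union_left _ (by simp [hj])
      · exact Finset.mem_union_right _ (by simp [hj])
    have hc1 : (univ.filter (fun j => isBest (eHat1 g A) (cIdx g) j)).card ≤ g :=
      best_card _ _ (fun j => Nat.mod_lt _ hg0)
    have hc2 : (univ.filter (fun j => isBest (eHat2 g A) (rIdx g) j)).card ≤ g :=
      best_card _ _ (fun j => Nat.mod_lt _ hg0)
    calc (mech g A).card
        ≤ ((univ.filter (fun j => isBest (eHat1 g A) (cIdx g) j)) ∪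
           (univ.filter (fun j => isBest (eHat2 g A) (rIdx g) j))).card :=
          Finset.card_le_card hsub
      _ ≤ _ + _ := Finset.card_union_le _ _
      _ ≤ k := by omega
  · -- impartiality
    intro A A' _ _ i hrow
    rw [mem_mech, mem_mech]
    apply or_congr
    · exact isBest_congr (fun u hu => eHat1_eq hrow hu)
    · exact isBest_congr (fun u hu => eHat2_eq hg0 hng hrow hu)
  · -- alpha-optimality
    intro A hA
    rw [hαc]
    -- total received
    set Tot : ℝ := ∑ j : Fin n, (∑ i : Fin n, A i j) with hTot
    have hTotnn : 0 ≤ Tot := by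
      apply Finset.sum_nonneg
      intro j _
      exact Finset.sum_nonneg (fun i _ => hA.1 i j)
    have hopt : optScore k A ≤ Tot := by
      apply Real.sSup_le _ hTotnn
      rintro x ⟨S, hS, rfl⟩
      show ∑ i : Fin n, ∑ j ∈ S, A i j ≤ Tot
      refine le_trans (le_of_eq Finset.sum_comm) ?_
      apply Finset.sum_le_sum_of_subset_of_nonneg (Finset.subset_univ S)
      intro j _ _
      exact Finset.sum_nonneg (fun i _ => hA.1 i j)
    -- split of received votes
    have hsplit : ∀ j : Fin n, (∑ i : Fin n, A i j) = eHat1 g A j + eHat2 g A j := by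
      intro j
      have h1' := Finset.sum_filter_add_sum_filter_not univ
        (fun i : Fin n => cIdx g i = cIdx g j) (fun i => A i j)
      have h2' : univ.filter (fun i : Fin n => cIdx g i = cIdx g j)
          = insert j (univ.filter (fun i : Fin n => cIdx g i = cIdx g j ∧ i ≠ j)) := by
        ext v
        simp only [mem_filter, mem_univ, true_and, mem_insert]
        constructor
        · intro hv
          by_cases hvj : v = j
          · exact Or.inl hvj
          · exact Or.inr ⟨hv, hvj⟩
        · rintro (rfl | ⟨hv, _⟩)
          · rfl
          · exact hv
      rw [h2', Finset.sum_insert (by simp)] at h1'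
      rw [hA.2 j] at h1'
      have : eHat2 g A j + eHat1 g A j = ∑ i : Fin n, A i j := by
        rw [← h1']
        unfold eHat2 eHat1
        ring
      linarith [this]
    have he1nn : ∀ j, 0 ≤ eHat1 g A j := by
      intro j
      exact Finset.sum_nonneg (fun i _ => hA.1 i j)
    have he2nn : ∀ j, 0 ≤ eHat2 g A j := by
      intro j
      exact Finset.sum_nonneg (fun i _ => hA.1 i j)
    -- key lemma for columns and rows
    have hcard1 : ∀ j : Fin n,
        c * (((univ.filter (fun i : Fin n => cIdx g i = cIdx g j)).card : ℕ) : ℝ) ≤ 1 :=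
      fun j => hcard_le_one _ (fiber_card_col hg0 hpq j)
    have hcard2 : ∀ j : Fin n,
        c * (((univ.filter (fun i : Fin n => rIdx g i = rIdx g j)).card : ℕ) : ℝ) ≤ 1 :=
      fun j => hcard_le_one _ (fiber_card_row hg0 hpq j)
    have hkey1 := key hn0 (eHat1 g A) (cIdx g) he1nn c hc0 hcard1
    have hkey2 := key hn0 (eHat2 g A) (rIdx g) he2nn c hc0 hcard2
    have hsub1 : ∑ j ∈ univ.filter (fun j => isBest (eHat1 g A) (cIdx g) j), eHat1 g A j
        ≤ ∑ j ∈ mech g A, eHat1 g A j := by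
      apply Finset.sum_le_sum_of_subset_of_nonneg
      · intro j hj
        simp only [mem_filter, mem_univ, true_and] at hj
        rw [mem_mech]
        exact Or.inl hj
      · intro j _ _
        exact he1nn j
    have hsub2 : ∑ j ∈ univ.filter (fun j => isBest (eHat2 g A) (rIdx g) j), eHat2 g A j
        ≤ ∑ j ∈ mech g A, eHat2 g A j := by
      apply Finset.sum_le_sum_of_subset_of_nonneg
      · intro j hj
        simp only [mem_filter, mem_univ, true_and] at hj
        rw [mem_mech]
        exact Or.inr hj
      · intro j _ _
        exact he2nn j
    have hscore : score A (mech g A) = ∑ j ∈ mech g A, (∑ i : Fin n, A i j) := by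
      rw [score, Finset.sum_comm]
    calc c * optScore k A
        ≤ c * Tot := mul_le_mul_of_nonneg_left hopt hc0
      _ = c * (∑ j : Fin n, eHat1 g A j) + c * (∑ j : Fin n, eHat2 g A j) := by
          rw [hTot]
          rw [show (∑ j : Fin n, (∑ i : Fin n, A i j))
              = (∑ j : Fin n, eHat1 g A j) + (∑ j : Fin n, eHat2 g A j) by
            rw [← Finset.sum_add_distrib]
            exact Finset.sum_congr rfl (fun j _ => hsplit j)]
          ring
      _ ≤ (∑ j ∈ univ.filter (fun j => isBest (eHat1 g A) (cIdx g) j), eHat1 g A j)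
          + (∑ j ∈ univ.filter (fun j => isBest (eHat2 g A) (rIdx g) j), eHat2 g A j) :=
          add_le_add hkey1 hkey2
      _ ≤ (∑ j ∈ mech g A, eHat1 g A j) + (∑ j ∈ mech g A, eHat2 g A j) :=
          add_le_add hsub1 hsub2
      _ = ∑ j ∈ mech g A, (eHat1 g A j + eHat2 g A j) := by
          rw [← Finset.sum_add_distrib]
      _ = ∑ j ∈ mech g A, (∑ i : Fin n, A i j) :=
          Finset.sum_congr rfl (fun j _ => (hsplit j).symm)
      _ = score A (mech g A) := hscore.symm
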